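/- arXiv:1004.3085 — 2 statements merged into one kernel-verified Lean document; each statement's English description precedes it below -/
import Mathlib

section
/- For every n ∈ ℕ, every integer l with 1 ≤ l ≤ n, every x^n ∈ 𝒳^n, and every a^l ∈ 𝒳^l, the overlapping and non-overlapping empirical distributions satisfy the exact identity (n − l + 1) · p_l(a^l | x^n) = Σ_{s=0}^{l−1} ⌊(n − s)/l⌋ · q_{l;s}(a^l | x^n); equivalently, the number of indices 1 ≤ i ≤ n − l + 1 with x_i^{i+l−1} = a^l equals the total number of pairs (s, i) with 0 ≤ s < l and 0 ≤ i < ⌊(n−s)/l⌋ such that x_{il+1+s}^{(i+1)l+s} = a^l. -/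
section Empirical

variable {𝒳 : Type} [Nonempty 𝒳] [DecidableEq 𝒳]

/-- The length-`l` subblock of `x^n` starting at (0-based) position `start`,
i.e. `x_{start+1}^{start+l}` in 1-based notation (junk outside the range). -/
noncomputable def subblock {n : ℕ} (x : Fin n → 𝒳) (start l : ℕ) : Fin l → 𝒳 :=
  fun t => if h : start + (t : ℕ) < n then x ⟨start + t, h⟩ else Classical.arbitrary 𝒳

/-- The overlapping empirical distribution `p_l(a^l | x^n)`. -/
noncomputable def pEmp {n : ℕ} (l : ℕ) (x : Fin n → 𝒳) (a : Fin l → 𝒳) : ℝ :=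
  (((Finset.range (n - l + 1)).filter fun i => subblock x i l = a).card : ℝ) /
    ((n - l + 1 : ℕ) : ℝ)

/-- The non-overlapping empirical distribution `q_{l;s}(a^l | x^n)` with offset `s`. -/
noncomputable def qEmp {n : ℕ} (l s : ℕ) (x : Fin n → 𝒳) (a : Fin l → 𝒳) : ℝ :=
  (((Finset.range ((n - s) / l)).filter fun i => subblock x (i * l + s) l = a).card : ℝ) /
    (((n - s) / l : ℕ) : ℝ)

end Empirical

lemma aux_mul_div (N c : ℕ) (h : c ≤ N) : (N : ℝ) * ((c : ℝ) / (N : ℝ)) = c := by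
  rcases Nat.eq_zero_or_pos N with h0 | h0
  · subst h0; interval_cases c; simp
  · field_simp

/-- For `1 ≤ l ≤ n`, the overlapping and non-overlapping empirical distributions satisfy
`(n − l + 1) p_l(a^l|x^n) = Σ_{s=0}^{l−1} ⌊(n−s)/l⌋ q_{l;s}(a^l|x^n)`; equivalently, the number
of occurrences of `a^l` as an overlapping subblock equals the total number of pairs `(s, i)`
locating `a^l` as a non-overlapping block with offset `s`. -/
theorem overlapping_eq_sum_nonoverlapping
    {𝒳 : Type} [Nonempty 𝒳] [DecidableEq 𝒳]
    {n l : ℕ} (hl : 1 ≤ l) (hln : l ≤ n) (x : Fin n → 𝒳) (a : Fin l → 𝒳) :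
    ((n : ℝ) - l + 1) * pEmp l x a =
      ∑ s ∈ Finset.range l, (((n - s) / l : ℕ) : ℝ) * qEmp l s x a ∧
    ((Finset.range (n - l + 1)).filter fun i => subblock x i l = a).card =
      ∑ s ∈ Finset.range l,
        ((Finset.range ((n - s) / l)).filter fun i => subblock x (i * l + s) l = a).card := by
  classical
  have harith : ∀ s, s < l → ∀ i : ℕ, (i < (n - s) / l ↔ i * l + s < n - l + 1) := by
    intro s hs i
    rw [← Nat.add_one_le_iff, Nat.le_div_iff_mul_le (show 0 < l by omega), add_one_mul]
    omega
  have hcard : ((Finset.range (n - l + 1)).filter fun i => subblock x i l = a).card =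
      ∑ s ∈ Finset.range l,
        ((Finset.range ((n - s) / l)).filter fun i => subblock x (i * l + s) l = a).card := by
    have hset : ((Finset.range (n - l + 1)).filter fun i => subblock x i l = a)
        = (Finset.range l).biUnion (fun s =>
            ((Finset.range ((n - s) / l)).filter fun i => subblock x (i * l + s) l = a).image
              (fun i => i * l + s)) := by
      ext j
      simp only [Finset.mem_filter, Finset.mem_range, Finset.mem_biUnion, Finset.mem_image]
      constructor
      · rintro ⟨hj, hP⟩
        refine ⟨j % l, Nat.mod_lt _ (by omega), j / l, ⟨?_, ?_⟩, ?_⟩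
        · rw [harith _ (Nat.mod_lt _ (by omega)), Nat.div_add_mod']
          exact hj
        · rw [Nat.div_add_mod']; exact hP
        · exact Nat.div_add_mod' j l
      · rintro ⟨s, hs, i, ⟨hi, hP⟩, rfl⟩
        exact ⟨(harith s hs i).mp hi, hP⟩
    rw [hset, Finset.card_biUnion]
    · refine Finset.sum_congr rfl fun s _ => ?_
      refine Finset.card_image_of_injective _ (fun i j h => ?_)
      exact Nat.eq_of_mul_eq_mul_right (show 0 < l by omega) (by omega)
    · intro s hs t ht hst
      simp only [Finset.coe_range, Set.mem_Iio] at hs ht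
      rw [Function.onFun, Finset.disjoint_left]
      rintro j hj hj'
      simp only [Finset.mem_image, Finset.mem_filter, Finset.mem_range] at hj hj'
      obtain ⟨i, _, rfl⟩ := hj
      obtain ⟨i', _, he⟩ := hj'
      have h1 : (i * l + s) % l = s := by rw [mul_comm, Nat.mul_add_mod, Nat.mod_eq_of_lt hs]
      have h2 : (i' * l + t) % l = t := by rw [mul_comm, Nat.mul_add_mod, Nat.mod_eq_of_lt ht]
      exact hst (by rw [← h1, ← he, h2])
  refine ⟨?_, hcard⟩
  have h1 : ((n : ℝ) - l + 1) = ((n - l + 1 : ℕ) : ℝ) := by push_cast [hln]; ring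
  rw [h1, pEmp, aux_mul_div _ _ (by
    exact le_trans (Finset.card_filter_le _ _) (by simp))]
  rw [hcard]
  push_cast
  refine Finset.sum_congr rfl fun s _ => ?_
  rw [qEmp, aux_mul_div _ _ (le_trans (Finset.card_filter_le _ _) (by simp))]
end

section
/- For every n ∈ ℕ, every integer l with 1 ≤ l ≤ n and n ≥ 2l − 1, every x^n ∈ 𝒳^n, and every a^l ∈ 𝒳^l, the average over offsets of the non-overlapping empirical distributions is dominated by the overlapping empirical distribution: (1/l) Σ_{s=0}^{l−1} q_{l;s}(a^l | x^n) ≤ ((n − l + 1)/(n − 2l + 2)) · p_l(a^l | x^n). (This is the corrected form of inequality (4) of the paper; it follows from the identity (n − l + 1) p_l(a^l|x^n) = Σ_{s=0}^{l−1} ⌊(n−s)/l⌋ q_{l;s}(a^l|x^n) together with the bound ⌊(n−s)/l⌋ ≥ (n − 2l + 2)/l valid for 0 ≤ s ≤ l − 1.) -/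
/-- Summing the per-offset counts over all offsets recovers the overlapping count. -/
theorem sum_card_offsets (n l : ℕ) (hl : 1 ≤ l) (hln : l ≤ n) (Q : ℕ → Prop) [DecidablePred Q] :
    ∑ s ∈ Finset.range l,
        ((Finset.range ((n - s) / l)).filter fun j => Q (j * l + s)).card
      = ((Finset.range (n - l + 1)).filter Q).card := by
  classical
  simp_rw [Finset.card_filter]
  rw [Finset.sum_sigma']
  refine Finset.sum_nbij' (fun p => p.2 * l + p.1) (fun i => ⟨i % l, i / l⟩) ?_ ?_ ?_ ?_ ?_
  · rintro ⟨s, j⟩ hp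
    simp only [Finset.mem_sigma, Finset.mem_range] at hp ⊢
    obtain ⟨hs, hj⟩ := hp
    have h1 : (j + 1) * l ≤ n - s := (Nat.le_div_iff_mul_le hl).mp hj
    have h2 : j * l + l ≤ n - s := by rw [add_mul, one_mul] at h1; exact h1
    generalize j * l = m at h2 ⊢
    omega
  · intro i hi
    simp only [Finset.mem_range] at hi
    simp only [Finset.mem_sigma, Finset.mem_range]
    refine ⟨Nat.mod_lt _ hl, ?_⟩
    have h1 : (i / l + 1) * l ≤ n - i % l := by
      have hd : l * (i / l) + i % l = i := Nat.div_add_mod i l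
      rw [add_mul, one_mul, mul_comm]
      generalize hm : l * (i / l) = m at hd
      have hr : i % l < l := Nat.mod_lt _ hl
      omega
    exact (Nat.le_div_iff_mul_le hl).mpr h1
  · rintro ⟨s, j⟩ hp
    simp only [Finset.mem_sigma, Finset.mem_range] at hp
    obtain ⟨hs, hj⟩ := hp
    have h1 : (j * l + s) % l = s := by
      rw [Nat.add_comm, Nat.add_mul_mod_self_right, Nat.mod_eq_of_lt hs]
    have h2 : (j * l + s) / l = j := by
      rw [Nat.add_comm, Nat.add_mul_div_right _ _ hl, Nat.div_eq_of_lt hs, Nat.zero_add]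
    simp [h1, h2]
  · intro i _
    exact Nat.div_add_mod' i l
  · rintro ⟨s, j⟩ _
    rfl

/-- For `1 ≤ l ≤ n` with `n ≥ 2l − 1`, the average over offsets of the non-overlapping empirical
distributions is dominated by the overlapping empirical distribution:
`(1/l) Σ_{s=0}^{l−1} q_{l;s}(a^l | x^n) ≤ ((n − l + 1)/(n − 2l + 2)) · p_l(a^l | x^n)`. -/
theorem avg_nonoverlapping_le_overlapping
    {𝒳 : Type} [Nonempty 𝒳] [DecidableEq 𝒳]
    {n l : ℕ} (hl : 1 ≤ l) (hln : l ≤ n) (hn : 2 * l - 1 ≤ n)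
    (x : Fin n → 𝒳) (a : Fin l → 𝒳) :
    (1 / (l : ℝ)) * ∑ s ∈ Finset.range l, qEmp l s x a ≤
      (((n : ℝ) - l + 1) / ((n : ℝ) - 2 * l + 2)) * pEmp l x a := by
  classical
  have hlR : (0 : ℝ) < l := by exact_mod_cast hl
  have hnR : ((2 * l : ℕ) : ℝ) - 1 ≤ n := by
    have : (2 * l - 1 : ℕ) ≤ n := hn
    have h2l : 1 ≤ 2 * l := by omega
    have := (Nat.cast_le (α := ℝ)).mpr this
    rwa [Nat.cast_sub h2l, Nat.cast_one] at this
  have hD : (0 : ℝ) < (n : ℝ) - 2 * l + 2 := by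
    push_cast at hnR; linarith
  have hNpos : ∀ s ∈ Finset.range l, (0 : ℕ) < (n - s) / l := by
    intro s hs
    simp only [Finset.mem_range] at hs
    refine Nat.div_pos ?_ hl
    omega
  have hDN : ∀ s ∈ Finset.range l, (n : ℝ) - 2 * l + 2 ≤ (l : ℝ) * (((n - s) / l : ℕ) : ℝ) := by
    intro s hs
    simp only [Finset.mem_range] at hs
    have h1 : n - s < ((n - s) / l + 1) * l := by rw [mul_comm]; exact Nat.lt_mul_div_succ _ hl
    have h2 : n + 2 ≤ l * ((n - s) / l) + 2 * l := by
      rw [add_mul, one_mul, mul_comm] at h1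
      generalize l * ((n - s) / l) = m at h1 ⊢
      omega
    have := (Nat.cast_le (α := ℝ)).mpr h2
    push_cast at this
    linarith
  -- notation
  set C : ℕ := ((Finset.range (n - l + 1)).filter fun i => subblock x i l = a).card with hC
  set c : ℕ → ℕ := fun s =>
    ((Finset.range ((n - s) / l)).filter fun j => subblock x (j * l + s) l = a).card with hc
  have key : ∑ s ∈ Finset.range l, c s = C :=
    sum_card_offsets n l hl hln (fun i => subblock x i l = a)
  have hcast : ((n - l + 1 : ℕ) : ℝ) = (n : ℝ) - l + 1 := by
    rw [Nat.cast_add, Nat.cast_sub hln]; norm_num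
  have hRHS : (((n : ℝ) - l + 1) / ((n : ℝ) - 2 * l + 2)) * pEmp l x a
      = (C : ℝ) / ((n : ℝ) - 2 * l + 2) := by
    rw [pEmp, ← hC, hcast]
    have hpos : (0 : ℝ) < (n : ℝ) - l + 1 := by
      have : (l : ℝ) ≤ n := by exact_mod_cast hln
      linarith
    field_simp
  rw [hRHS, ← key]
  push_cast
  rw [Finset.sum_div, Finset.mul_sum]
  refine Finset.sum_le_sum ?_
  intro s hs
  have hN : (0 : ℝ) < (((n - s) / l : ℕ) : ℝ) := by exact_mod_cast hNpos s hs
  have hq : qEmp l s x a = (c s : ℝ) / (((n - s) / l : ℕ) : ℝ) := rfl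
  rw [hq]
  rw [div_mul_eq_mul_div, one_mul, div_div]
  have hcnn : (0 : ℝ) ≤ (c s : ℝ) := Nat.cast_nonneg _
  gcongr
  have h := hDN s hs
  rw [mul_comm] at h
  linarith
end
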